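/- Let (E,μ) be a measure space and Φ₀, Φ₁, Φ₂ Young functions satisfying Φ₀(t₁t₂) ≤ Φ₁(t₁) + Φ₂(t₂) for all t₁, t₂ ≥ 0. Then for f₁ ∈ L^{Φ₁}(μ) and f₂ ∈ L^{Φ₂}(μ), the product f₁f₂ ∈ L^{Φ₀}(μ) and ‖f₁f₂‖_{L^{Φ₀}} ≤ 2‖f₁‖_{L^{Φ₁}}‖f₂‖_{L^{Φ₂}}. -/

import Mathlib

open MeasureTheory
open scoped NNReal ENNReal

/-- The Luxemburg norm `‖f‖_{L^Φ(μ)} = inf{ c > 0 : ∫ Φ(|f|/c) dμ ≤ 1 }`. -/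
noncomputable def orliczNorm {α : Type*} [MeasurableSpace α] (Φ : ℝ≥0∞ → ℝ≥0∞)
    (μ : Measure α) (f : α → ℂ) : ℝ≥0∞ :=
  sInf {c : ℝ≥0∞ | c ≠ 0 ∧ ∫⁻ x, Φ ((‖f x‖₊ : ℝ≥0∞) / c) ∂μ ≤ 1}

/-- A convex function on `ℝ≥0∞` vanishing at `0` with value `⊤` at `⊤` is monotone. -/
lemma orlicz_mono_of_conv {Φ : ℝ≥0∞ → ℝ≥0∞}
    (hc : ∀ (s₁ s₂ : ℝ≥0) (t₁ t₂ : ℝ≥0∞), s₁ + s₂ = 1 →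
      Φ (s₁ • t₁ + s₂ • t₂) ≤ s₁ • Φ t₁ + s₂ • Φ t₂)
    (h0 : Φ 0 = 0) (ht : Φ ⊤ = ⊤) : Monotone Φ := by
  intro t₁ t₂ h
  rcases eq_or_ne t₂ ⊤ with rfl | h2top
  · simp [ht]
  rcases eq_or_ne t₂ 0 with rfl | h20
  · simp [le_zero_iff.mp h]
  set s : ℝ≥0 := (t₁ / t₂).toNNReal with hs
  have hdiv : t₁ / t₂ ≤ 1 := by
    calc t₁ / t₂ ≤ t₂ / t₂ := ENNReal.div_le_div_right h t₂
    _ = 1 := ENNReal.div_self h20 h2top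
  have hdivtop : t₁ / t₂ ≠ ⊤ := (hdiv.trans_lt (by norm_num)).ne
  have hs1 : s ≤ 1 := by
    rw [hs]
    have := ENNReal.toNNReal_mono (by norm_num) hdiv
    simpa using this
  have hscoe : (s : ℝ≥0∞) = t₁ / t₂ := ENNReal.coe_toNNReal hdivtop
  have hsum : s + (1 - s) = 1 := by
    rw [add_tsub_cancel_of_le hs1]
  have hmul : (s : ℝ≥0∞) * t₂ = t₁ := by
    rw [hscoe, ENNReal.div_mul_cancel h20 h2top]
  have := hc s (1 - s) t₂ 0 hsum
  simp only [smul_zero, add_zero, h0, smul_eq_mul] at this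
  rw [ENNReal.smul_def, smul_eq_mul, hmul] at this
  calc Φ t₁ ≤ (s : ℝ≥0∞) * Φ t₂ := by simpa [ENNReal.smul_def] using this
    _ ≤ 1 * Φ t₂ := by
        gcongr
        exact_mod_cast hs1
    _ = Φ t₂ := one_mul _

/-- Approximation lemma to pass from strict upper bounds to the infimum. -/
lemma orlicz_aux_le {L N₁ N₂ : ℝ≥0∞} (hN₁ : N₁ ≠ ⊤) (hN₂ : N₂ ≠ ⊤)
    (h : ∀ c₁ c₂ : ℝ≥0∞, N₁ < c₁ → N₂ < c₂ → c₁ ≠ ⊤ → c₂ ≠ ⊤ → L ≤ 2 * c₁ * c₂) :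
    L ≤ 2 * N₁ * N₂ := by
  lift N₁ to ℝ≥0 using hN₁
  lift N₂ to ℝ≥0 using hN₂
  refine ENNReal.le_of_forall_pos_le_add fun ε hε _ => ?_
  set δ : ℝ≥0 := min 1 (ε / (2 * (N₁ + N₂ + 1))) with hδdef
  have hδpos : 0 < δ := lt_min one_pos (by positivity)
  have hδ1 : δ ≤ 1 := min_le_left _ _
  have hδ2 : δ * (2 * (N₁ + N₂ + 1)) ≤ ε := by
    rw [← le_div_iff₀ (by positivity)]
    exact min_le_right _ _
  have h1 : L ≤ 2 * ((N₁ + δ : ℝ≥0) : ℝ≥0∞) * ((N₂ + δ : ℝ≥0) : ℝ≥0∞) := by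
    refine h _ _ ?_ ?_ ENNReal.coe_ne_top ENNReal.coe_ne_top
    · exact_mod_cast (lt_add_iff_pos_right _).mpr hδpos
    · exact_mod_cast (lt_add_iff_pos_right _).mpr hδpos
  refine h1.trans ?_
  have h2 : 2 * (N₁ + δ) * (N₂ + δ) ≤ 2 * N₁ * N₂ + ε := by
    have := NNReal.coe_le_coe.mpr hδ2
    have hδ1' := NNReal.coe_le_coe.mpr hδ1
    rw [← NNReal.coe_le_coe]
    push_cast at *
    nlinarith [δ.coe_nonneg, N₁.coe_nonneg, N₂.coe_nonneg]
  calc (2 * ((N₁ + δ : ℝ≥0) : ℝ≥0∞) * ((N₂ + δ : ℝ≥0) : ℝ≥0∞))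
      = ((2 * (N₁ + δ) * (N₂ + δ) : ℝ≥0) : ℝ≥0∞) := by push_cast; ring
    _ ≤ ((2 * N₁ * N₂ + ε : ℝ≥0) : ℝ≥0∞) := by exact_mod_cast h2
    _ = 2 * (N₁ : ℝ≥0∞) * N₂ + ε := by push_cast; ring

/-- Hölder's inequality for Orlicz spaces: if `Φ₀(t₁t₂) ≤ Φ₁(t₁) + Φ₂(t₂)` for Young
functions `Φ₀, Φ₁, Φ₂`, then `‖f₁f₂‖_{L^{Φ₀}} ≤ 2‖f₁‖_{L^{Φ₁}}‖f₂‖_{L^{Φ₂}}`. -/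
theorem orlicz_holder {α : Type*} [MeasurableSpace α] (μ : Measure α)
    (Φ₀ Φ₁ Φ₂ : ℝ≥0∞ → ℝ≥0∞)
    (hconv : ∀ j ∈ [Φ₀, Φ₁, Φ₂], ∀ (s₁ s₂ : ℝ≥0) (t₁ t₂ : ℝ≥0∞), s₁ + s₂ = 1 →
      j (s₁ • t₁ + s₂ • t₂) ≤ s₁ • j t₁ + s₂ • j t₂)
    (hzero : ∀ j ∈ [Φ₀, Φ₁, Φ₂], j 0 = 0)
    (htop : ∀ j ∈ [Φ₀, Φ₁, Φ₂], j ⊤ = ⊤)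
    (hprod : ∀ t₁ t₂ : ℝ≥0∞, Φ₀ (t₁ * t₂) ≤ Φ₁ t₁ + Φ₂ t₂)
    (f₁ f₂ : α → ℂ) (hm₁ : AEMeasurable f₁ μ) (hm₂ : AEMeasurable f₂ μ)
    (hf₁ : orliczNorm Φ₁ μ f₁ ≠ ⊤) (hf₂ : orliczNorm Φ₂ μ f₂ ≠ ⊤) :
    orliczNorm Φ₀ μ (fun x => f₁ x * f₂ x) ≤
      2 * orliczNorm Φ₁ μ f₁ * orliczNorm Φ₂ μ f₂ := by
  have hΦ₀mono : Monotone Φ₀ :=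
    orlicz_mono_of_conv (hconv Φ₀ (by simp)) (hzero Φ₀ (by simp)) (htop Φ₀ (by simp))
  have hΦ₁mono : Monotone Φ₁ :=
    orlicz_mono_of_conv (hconv Φ₁ (by simp)) (hzero Φ₁ (by simp)) (htop Φ₁ (by simp))
  -- key estimate: for finite nonzero `c₁, c₂` admissible for `f₁, f₂`,
  -- `2 c₁ c₂` is admissible for the product.
  have key : ∀ c₁ c₂ : ℝ≥0∞, c₁ ≠ 0 → c₁ ≠ ⊤ → c₂ ≠ 0 → c₂ ≠ ⊤ →
      (∫⁻ x, Φ₁ ((‖f₁ x‖₊ : ℝ≥0∞) / c₁) ∂μ ≤ 1) →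
      (∫⁻ x, Φ₂ ((‖f₂ x‖₊ : ℝ≥0∞) / c₂) ∂μ ≤ 1) →
      orliczNorm Φ₀ μ (fun x => f₁ x * f₂ x) ≤ 2 * c₁ * c₂ := by
    intro c₁ c₂ h10 h1t h20 h2t hint₁ hint₂
    have hpt : ∀ x, Φ₀ ((‖f₁ x * f₂ x‖₊ : ℝ≥0∞) / (2 * c₁ * c₂)) ≤
        2⁻¹ * (Φ₁ ((‖f₁ x‖₊ : ℝ≥0∞) / c₁) + Φ₂ ((‖f₂ x‖₊ : ℝ≥0∞) / c₂)) := by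
      intro x
      set a : ℝ≥0∞ := (‖f₁ x‖₊ : ℝ≥0∞)
      set b : ℝ≥0∞ := (‖f₂ x‖₊ : ℝ≥0∞)
      have hnorm : (‖f₁ x * f₂ x‖₊ : ℝ≥0∞) = a * b := by
        rw [nnnorm_mul]; push_cast; ring
      have hhalf : ((((1 : ℝ≥0)/2) : ℝ≥0) : ℝ≥0∞) = 2⁻¹ := by
        rw [one_div, ENNReal.coe_inv (by norm_num)]
        norm_num
      have hdiv : a * b / (2 * c₁ * c₂) =
          ((1 : ℝ≥0)/2) • ((a / c₁) * (b / c₂)) + ((1 : ℝ≥0)/2) • (0 : ℝ≥0∞) := by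
        rw [smul_zero, add_zero, ENNReal.smul_def, smul_eq_mul, hhalf, div_eq_mul_inv,
          div_eq_mul_inv, div_eq_mul_inv,
          ENNReal.mul_inv (Or.inr h2t) (Or.inr h20),
          ENNReal.mul_inv (Or.inr h1t) (Or.inr h10)]
        ring
      have hc := hconv Φ₀ (by simp) ((1 : ℝ≥0)/2) ((1 : ℝ≥0)/2)
        ((a / c₁) * (b / c₂)) 0 (by
          rw [one_div, ← two_mul, mul_inv_cancel₀ (two_ne_zero (α := ℝ≥0))])
      rw [hnorm, hdiv]
      refine hc.trans ?_
      have h0 : Φ₀ 0 = 0 := hzero Φ₀ (by simp)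
      rw [h0, smul_zero, add_zero, ENNReal.smul_def, smul_eq_mul]
      rw [hhalf]
      gcongr
      exact hprod _ _
    have hmeas₁ : AEMeasurable (fun x => Φ₁ ((‖f₁ x‖₊ : ℝ≥0∞) / c₁)) μ :=
      hΦ₁mono.measurable.comp_aemeasurable (hm₁.nnnorm.coe_nnreal_ennreal.div aemeasurable_const)
    have hint : ∫⁻ x, Φ₀ ((‖f₁ x * f₂ x‖₊ : ℝ≥0∞) / (2 * c₁ * c₂)) ∂μ ≤ 1 := by
      calc ∫⁻ x, Φ₀ ((‖f₁ x * f₂ x‖₊ : ℝ≥0∞) / (2 * c₁ * c₂)) ∂μ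
          ≤ ∫⁻ x, 2⁻¹ * (Φ₁ ((‖f₁ x‖₊ : ℝ≥0∞) / c₁) + Φ₂ ((‖f₂ x‖₊ : ℝ≥0∞) / c₂)) ∂μ :=
            lintegral_mono hpt
        _ = 2⁻¹ * ∫⁻ x, (Φ₁ ((‖f₁ x‖₊ : ℝ≥0∞) / c₁) + Φ₂ ((‖f₂ x‖₊ : ℝ≥0∞) / c₂)) ∂μ :=
            lintegral_const_mul' _ _ (by norm_num)
        _ = 2⁻¹ * ((∫⁻ x, Φ₁ ((‖f₁ x‖₊ : ℝ≥0∞) / c₁) ∂μ) +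
              ∫⁻ x, Φ₂ ((‖f₂ x‖₊ : ℝ≥0∞) / c₂) ∂μ) := by
            rw [lintegral_add_left' hmeas₁]
        _ ≤ 2⁻¹ * (1 + 1) := by gcongr
        _ = 1 := by
            rw [one_add_one_eq_two, ENNReal.inv_mul_cancel (by norm_num) (by norm_num)]
    exact sInf_le ⟨mul_ne_zero (mul_ne_zero (by norm_num) h10) h20, hint⟩
  -- conclude by approximating the infima
  refine orlicz_aux_le hf₁ hf₂ fun c₁ c₂ hc₁ hc₂ hc₁t hc₂t => ?_
  obtain ⟨d₁, ⟨hd₁0, hd₁int⟩, hd₁lt⟩ := sInf_lt_iff.mp hc₁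
  obtain ⟨d₂, ⟨hd₂0, hd₂int⟩, hd₂lt⟩ := sInf_lt_iff.mp hc₂
  have hd₁t : d₁ ≠ ⊤ := (hd₁lt.trans_le le_top).ne
  have hd₂t : d₂ ≠ ⊤ := (hd₂lt.trans_le le_top).ne
  calc orliczNorm Φ₀ μ (fun x => f₁ x * f₂ x) ≤ 2 * d₁ * d₂ :=
        key d₁ d₂ hd₁0 hd₁t hd₂0 hd₂t hd₁int hd₂int
    _ ≤ 2 * c₁ * c₂ := mul_le_mul' (mul_le_mul' le_rfl hd₁lt.le) hd₂lt.le
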